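/- Let $(\mathfrak{p}_{ij}^k)$ be a family of scalars with $\mathfrak{p}_{ij}^0=\delta_{0,i+j}$ and $\mathfrak{p}_{ij}^{l+h}=\sum_{a+b=i}\sum_{c+d=j}\mathfrak{p}_{ac}^l\mathfrak{p}_{bd}^h$, and with $\mathfrak{p}_{ij}^k=0$ for $k>i+j$. Then for all $k\ge 1$, $\mathfrak{p}_{ij}^k=\sum \prod_{s=1}^k\mathfrak{p}_{i_sj_s}^1$, where the sum runs over all decompositions $i_1+\cdots+i_k=i$, $j_1+\cdots+j_k=j$ with $i_s+j_s\ge 1$ for all $s$. -/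

import Mathlib

open Finset

lemma sum_adT_succ {M : Type*} [AddCommMonoid M] (k n : ℕ) (f : (Fin (k + 1) → ℕ) → M) :
    ∑ x ∈ Finset.Nat.antidiagonalTuple (k + 1) n, f x
      = ∑ ab ∈ Finset.HasAntidiagonal.antidiagonal n, ∑ x ∈ Finset.Nat.antidiagonalTuple k ab.2,
          f (Fin.cons ab.1 x) := by
  rw [Finset.sum_sigma']
  refine Finset.sum_bij'
    (i := fun (x : Fin (k + 1) → ℕ) _ =>
      (⟨(x 0, ∑ i : Fin k, x i.succ), Fin.tail x⟩ : (_ : ℕ × ℕ) × (Fin k → ℕ)))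
    (j := fun y _ => Fin.cons y.1.1 y.2) ?_ ?_ ?_ ?_ ?_
  · intro x hx
    rw [Finset.Nat.mem_antidiagonalTuple] at hx
    simp only [Finset.mem_sigma, Finset.HasAntidiagonal.mem_antidiagonal, Finset.Nat.mem_antidiagonalTuple]
    exact ⟨by rw [← hx, Fin.sum_univ_succ], rfl⟩
  · intro y hy
    simp only [Finset.mem_sigma, Finset.HasAntidiagonal.mem_antidiagonal,
      Finset.Nat.mem_antidiagonalTuple] at hy
    rw [Finset.Nat.mem_antidiagonalTuple, Fin.sum_univ_succ]
    rw [Fin.cons_zero]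
    simp only [Fin.cons_succ]
    rw [hy.2, hy.1]
  · intro x _
    exact Fin.cons_self_tail x
  · intro y hy
    simp only [Finset.mem_sigma, Finset.HasAntidiagonal.mem_antidiagonal,
      Finset.Nat.mem_antidiagonalTuple] at hy
    refine Sigma.ext (Prod.ext rfl ?_) (by dsimp only; exact heq_of_eq (Fin.tail_cons _ _))
    dsimp only
    simp only [Fin.cons_succ]
    exact hy.2
  · intro x _
    exact congrArg f (Fin.cons_self_tail x).symm

lemma base_case {K : Type*} [Field K] (p : ℕ → ℕ → ℕ → K)
    (hvan : ∀ i j k, i + j < k → p i j k = 0) (i j : ℕ) :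
    p i j 1 = ∑ a ∈ Finset.Nat.antidiagonalTuple 1 i, ∑ b ∈ Finset.Nat.antidiagonalTuple 1 j,
        if ∀ s : Fin 1, 1 ≤ a s + b s then ∏ s : Fin 1, p (a s) (b s) 1 else 0 := by
  simp only [Finset.Nat.antidiagonalTuple_one, Finset.sum_singleton, Fin.forall_fin_one,
    Fin.prod_univ_one, Matrix.cons_val_zero, Matrix.cons_val_fin_one]
  by_cases h : 1 ≤ i + j
  · simp [h]
  · rw [if_neg h, hvan i j 1 (by omega)]

/-- the product formula for the coefficients of a coalgebra morphism. -/
theorem stmt1 {K : Type*} [Field K] [CharZero K]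
    (p : ℕ → ℕ → ℕ → K)
    (h0 : ∀ i j, p i j 0 = if i + j = 0 then 1 else 0)
    (hcm : ∀ i j l h : ℕ,
      p i j (l + h) = ∑ ab ∈ Finset.HasAntidiagonal.antidiagonal i, ∑ cd ∈ Finset.HasAntidiagonal.antidiagonal j,
        p ab.1 cd.1 l * p ab.2 cd.2 h)
    (hvan : ∀ i j k, i + j < k → p i j k = 0) :
    ∀ i j k, 1 ≤ k →
      p i j k = ∑ a ∈ Finset.Nat.antidiagonalTuple k i, ∑ b ∈ Finset.Nat.antidiagonalTuple k j,
        if ∀ s : Fin k, 1 ≤ a s + b s then ∏ s : Fin k, p (a s) (b s) 1 else 0 := by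
  intro i j k
  induction k generalizing i j with
  | zero => omega
  | succ n ih =>
    intro _
    match n, ih with
    | 0, _ => exact base_case p hvan i j
    | m + 1, ih =>
      have hih := fun i j => ih i j (by omega)
      have hsplit : p i j (m + 1 + 1) = ∑ ab ∈ Finset.HasAntidiagonal.antidiagonal i,
          ∑ cd ∈ Finset.HasAntidiagonal.antidiagonal j, p ab.1 cd.1 1 * p ab.2 cd.2 (m + 1) := by
        rw [show m + 1 + 1 = 1 + (m + 1) from by omega]; exact hcm i j 1 (m + 1)
      rw [hsplit, sum_adT_succ]
      refine Finset.sum_congr rfl fun ab _ => ?_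
      rw [Finset.sum_congr rfl fun x (_ : x ∈ Finset.Nat.antidiagonalTuple (m + 1) ab.2) =>
        sum_adT_succ (m + 1) j _]
      rw [Finset.sum_comm]
      refine Finset.sum_congr rfl fun cd _ => ?_
      rw [hih ab.2 cd.2, Finset.mul_sum]
      refine Finset.sum_congr rfl fun a' _ => ?_
      rw [Finset.mul_sum]
      refine Finset.sum_congr rfl fun b' _ => ?_
      simp only [Fin.forall_fin_succ, Fin.cons_zero, Fin.cons_succ, Fin.prod_univ_succ]
      by_cases h1 : 1 ≤ ab.1 + cd.1
      · by_cases h2 : ∀ s : Fin (m + 1), 1 ≤ a' s + b' s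
        · simp [h1, h2]
        · simp [h1, h2]
      · have hz : p ab.1 cd.1 1 = 0 := hvan _ _ _ (by omega)
        simp [h1, hz]
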